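/- Fourier transform of the complex-shifted Gaussian: let d ≥ 1, let z ∈ ℂ with Im z > 0, let w ∈ ℂ^d and p ∈ ℝ^d. Then ∫_{ℝ^d} exp(πi·z·∑_{j=1}^d (u_j + w_j)²)·exp(−2πi⟨p,u⟩) du = (−iz)^{−d/2} · exp(−πi‖p‖²·z⁻¹ + 2πi·∑_{j=1}^d p_j w_j). (This is the Fourier coefficient computation in the proof of the theta transformation formula, Theorem 4.7.) -/

import Mathlib

open Complex Real


/-- **Fourier transform of the complex-shifted Gaussian** (Fourier coefficient computation
in the proof of the theta transformation formula, Theorem 4.7): for `d ≥ 1`, `z ∈ ℂ` with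
`Im z > 0`, `w ∈ ℂ^d` and `p ∈ ℝ^d`,
`∫_{ℝ^d} exp(πiz ∑ (uⱼ+wⱼ)²) exp(−2πi⟨p,u⟩) du
  = (−iz)^{−d/2} exp(−πi‖p‖² z⁻¹ + 2πi ∑ pⱼwⱼ)`. -/
theorem shifted_gaussian_fourier (d : ℕ) (hd : 1 ≤ d)
    (z : ℂ) (hz : 0 < z.im) (w : Fin d → ℂ) (p : Fin d → ℝ) :
    (∫ u : Fin d → ℝ,
        Complex.exp ((Real.pi : ℂ) * Complex.I * z * ∑ j, ((u j : ℂ) + w j) ^ 2) *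
          Complex.exp (-(2 * (Real.pi : ℂ) * Complex.I) * ((∑ j, p j * u j : ℝ) : ℂ)))
      = (-Complex.I * z) ^ (-(d : ℂ) / 2) *
        Complex.exp (-(Real.pi : ℂ) * Complex.I * ((∑ j, (p j) ^ 2 : ℝ) : ℂ) * z⁻¹
          + 2 * (Real.pi : ℂ) * Complex.I * ∑ j, (p j : ℂ) * w j) := by
  have hz0 : z ≠ 0 := fun h => by simp [h] at hz
  have hπ : (π : ℂ) ≠ 0 := Complex.ofReal_ne_zero.mpr Real.pi_ne_zero
  set b : ℂ := -((π : ℂ) * Complex.I * z) with hb_def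
  have hb : 0 < b.re := by
    simp only [hb_def, neg_re, mul_re, mul_im, Complex.I_re, Complex.I_im, ofReal_re, ofReal_im]
    ring_nf
    positivity
  have hbz : (-Complex.I * z).re > 0 := by
    simp only [neg_mul, neg_re, mul_re, Complex.I_re, Complex.I_im]
    simpa using hz
  set c : Fin d → ℂ := fun j => 2 * (π : ℂ) * Complex.I * z * w j - 2 * (π : ℂ) * Complex.I * (p j : ℂ) with hc_def
  have h1 : ∀ u : Fin d → ℝ,
      Complex.exp ((π : ℂ) * Complex.I * z * ∑ j, ((u j : ℂ) + w j) ^ 2) *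
          Complex.exp (-(2 * (π : ℂ) * Complex.I) * ((∑ j, p j * u j : ℝ) : ℂ))
      = Complex.exp ((π : ℂ) * Complex.I * z * ∑ j, (w j) ^ 2) *
          Complex.exp (-b * ∑ j, ((u j : ℝ) : ℂ) ^ 2 + ∑ j, c j * (u j : ℂ)) := by
    intro u
    rw [← Complex.exp_add, ← Complex.exp_add]
    congr 1
    push_cast
    simp only [hb_def, hc_def, Finset.mul_sum, neg_mul, neg_neg, ← Finset.sum_neg_distrib,
      ← Finset.sum_add_distrib]
    exact Finset.sum_congr rfl fun j _ => by push_cast; ring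
  rw [MeasureTheory.integral_congr_ae (Filter.Eventually.of_forall h1),
    MeasureTheory.integral_const_mul, GaussianFourier.integral_cexp_neg_mul_sum_add hb c, Fintype.card_fin]
  have harg : (-Complex.I * z).arg ≠ π := by
    intro h
    rw [Complex.arg_eq_pi_iff] at h
    linarith [h.1]
  have hpow : ((π : ℂ) / b) ^ ((d : ℂ) / 2) = (-Complex.I * z) ^ (-(d : ℂ) / 2) := by
    have h1 : (π : ℂ) / b = (-Complex.I * z)⁻¹ := by
      rw [hb_def]
      field_simp
    rw [h1, Complex.inv_cpow _ _ harg, ← Complex.cpow_neg, neg_div]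
  rw [hpow, mul_left_comm]
  congr 1
  rw [← Complex.exp_add]
  congr 1
  have hsum : ∑ j, c j ^ 2 = (-4) * (π : ℂ) ^ 2 * z ^ 2 * ∑ j, w j ^ 2
      + 8 * (π : ℂ) ^ 2 * z * ∑ j, (p j : ℂ) * w j - 4 * (π : ℂ) ^ 2 * ∑ j, ((p j : ℝ) : ℂ) ^ 2 := by
    simp only [hc_def, Finset.mul_sum, ← Finset.sum_add_distrib, ← Finset.sum_sub_distrib]
    exact Finset.sum_congr rfl fun j _ => by
      linear_combination (4 * (π : ℂ) ^ 2 * (z * w j - (p j : ℂ)) ^ 2) * Complex.I_sq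
  rw [hsum, hb_def]
  push_cast
  field_simp
  ring_nf
  simp only [Complex.I_sq]
  ring
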